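/- Majorization of the regularized cost: with all entries of z, t, v strictly positive, c entrywise nonnegative, p entrywise nonnegative, μ ≥ 0, an assignment b : Fin K → Fin B, and any auxiliary weights α : Fin A → Fin I → Fin J → Fin K → ℝ with α(a,i,j,k) > 0 and ∑_{k} α(a,i,j,k) = 1 for all (a,i,j), define J⁺(z,t,v,b,α) = ∑_{a,i,j} [ c(a,i,j)·log c(a,i,j) − c(a,i,j) − c(a,i,j)·∑_{k} α(a,i,j,k)·log( z(a,k)·t(i,k)·v(j,k) / α(a,i,j,k) ) + m(a,i,j) ] + μ·∑_{k} ∑_{a} D(p(b(k),a) | z(a,k)) (with the convention c·log c = 0 at c = 0). Then J(z,t,v,b) ≤ J⁺(z,t,v,b,α) for every such α, and equality holds when α(a,i,j,k) = z(a,k)·t(i,k)·v(j,k) / m(a,i,j) for all (a,i,j,k). -/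

import Mathlib

open Finset Real

/-- Generalized Kullback–Leibler divergence `D(b|a) = b·log(b/a) + a − b`
(with the convention `0·log 0 = 0`, automatic since `Real.log 0 = 0`). -/
noncomputable def klD (q a : ℝ) : ℝ := q * Real.log (q / a) + a - q

/-- NTF model `m(a,i,j) = ∑ k, z(a,k)·t(i,k)·v(j,k)`. -/
noncomputable def ntfModel {A I J K : ℕ}
    (z : Fin A → Fin K → ℝ) (t : Fin I → Fin K → ℝ) (v : Fin J → Fin K → ℝ)
    (a : Fin A) (i : Fin I) (j : Fin J) : ℝ :=
  ∑ k, z a k * t i k * v j k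

/-- Regularized cost
`J(z,t,v,b) = ∑_{a,i,j} D(c(a,i,j)|m(a,i,j)) + μ·∑_k ∑_a D(p(b(k),a)|z(a,k))`. -/
noncomputable def ntfCost {A I J K B : ℕ}
    (c : Fin A → Fin I → Fin J → ℝ) (μ : ℝ) (p : Fin B → Fin A → ℝ)
    (z : Fin A → Fin K → ℝ) (t : Fin I → Fin K → ℝ) (v : Fin J → Fin K → ℝ)
    (b : Fin K → Fin B) : ℝ :=
  (∑ a, ∑ i, ∑ j, klD (c a i j) (ntfModel z t v a i j)) +
    μ * ∑ k, ∑ a, klD (p (b k) a) (z a k)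

/-- Surrogate (majorizing) function `J⁺` built from auxiliary weights `α`
(with the convention `c·log c = 0` at `c = 0`, automatic since `Real.log 0 = 0`). -/
noncomputable def ntfCostPlus {A I J K B : ℕ}
    (c : Fin A → Fin I → Fin J → ℝ) (μ : ℝ) (p : Fin B → Fin A → ℝ)
    (z : Fin A → Fin K → ℝ) (t : Fin I → Fin K → ℝ) (v : Fin J → Fin K → ℝ)
    (b : Fin K → Fin B)
    (α : Fin A → Fin I → Fin J → Fin K → ℝ) : ℝ :=
  (∑ a, ∑ i, ∑ j,
      (c a i j * Real.log (c a i j) - c a i j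
        - c a i j * ∑ k, α a i j k * Real.log (z a k * t i k * v j k / α a i j k)
        + ntfModel z t v a i j)) +
    μ * ∑ k, ∑ a, klD (p (b k) a) (z a k)


lemma klD_eq' (q a : ℝ) (hq : 0 ≤ q) (ha : 0 < a) :
    klD q a = q * Real.log q - q * Real.log a + a - q := by
  rcases eq_or_lt_of_le hq with h | h
  · simp [klD, ← h]
  · unfold klD
    rw [Real.log_div h.ne' ha.ne']
    ring

lemma jensen_log {K : ℕ} (α x : Fin K → ℝ) (hα : ∀ k, 0 < α k) (hx : ∀ k, 0 < x k)
    (hs : ∑ k, α k = 1) :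
    ∑ k, α k * Real.log (x k / α k) ≤ Real.log (∑ k, x k) := by
  have hK : 0 < K := by
    rcases Nat.eq_zero_or_pos K with h | h
    · subst h; simp at hs
    · exact h
  have hS : 0 < ∑ k, x k := Finset.sum_pos (fun k _ => hx k) ⟨⟨0, hK⟩, Finset.mem_univ _⟩
  have h1 : ∀ k : Fin K, α k * Real.log (x k / α k) - α k * Real.log (∑ j, x j)
      ≤ x k / (∑ j, x j) - α k := by
    intro k
    have hpos : 0 < x k / (α k * ∑ j, x j) := div_pos (hx k) (mul_pos (hα k) hS)
    have hle := Real.log_le_sub_one_of_pos hpos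
    have hlog : Real.log (x k / α k) - Real.log (∑ j, x j)
        = Real.log (x k / (α k * ∑ j, x j)) := by
      rw [Real.log_div (hx k).ne' (hα k).ne', Real.log_div (hx k).ne' (mul_pos (hα k) hS).ne',
        Real.log_mul (hα k).ne' hS.ne']
      ring
    have hmul : α k * (Real.log (x k / α k) - Real.log (∑ j, x j))
        ≤ α k * (x k / (α k * ∑ j, x j) - 1) :=
      mul_le_mul_of_nonneg_left (hlog ▸ hle) (hα k).le
    have heq : α k * (x k / (α k * ∑ j, x j) - 1) = x k / (∑ j, x j) - α k := by
      rw [mul_comm (α k) (∑ j, x j), ← div_div, mul_sub, mul_div_cancel₀ _ (hα k).ne', mul_one]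
    nlinarith [hmul]
  calc ∑ k, α k * Real.log (x k / α k)
      = ∑ k, (α k * Real.log (x k / α k) - α k * Real.log (∑ j, x j))
        + (∑ k, α k) * Real.log (∑ j, x j) := by
        rw [Finset.sum_sub_distrib, Finset.sum_mul]; ring
    _ ≤ (∑ k, (x k / (∑ j, x j) - α k)) + 1 * Real.log (∑ j, x j) := by
        rw [hs]
        exact add_le_add_left (Finset.sum_le_sum fun k _ => h1 k) _
    _ = Real.log (∑ j, x j) := by
        rw [Finset.sum_sub_distrib, ← Finset.sum_div, div_self hS.ne', hs]
        ring

/-- Majorization of the regularized cost: `J ≤ J⁺` for any admissible auxiliary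
weights `α`, with equality when `α(a,i,j,k) = z(a,k)·t(i,k)·v(j,k)/m(a,i,j)`. -/
theorem stmt9 (A I J K B : ℕ)
    (z : Fin A → Fin K → ℝ) (t : Fin I → Fin K → ℝ) (v : Fin J → Fin K → ℝ)
    (hz : ∀ a k, 0 < z a k) (ht : ∀ i k, 0 < t i k) (hv : ∀ j k, 0 < v j k)
    (c : Fin A → Fin I → Fin J → ℝ) (hc : ∀ a i j, 0 ≤ c a i j)
    (p : Fin B → Fin A → ℝ) (hp : ∀ b a, 0 ≤ p b a)
    (μ : ℝ) (hμ : 0 ≤ μ)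
    (b : Fin K → Fin B)
    (α : Fin A → Fin I → Fin J → Fin K → ℝ)
    (hα : ∀ a i j k, 0 < α a i j k)
    (hαsum : ∀ a i j, ∑ k, α a i j k = 1) :
    ntfCost c μ p z t v b ≤ ntfCostPlus c μ p z t v b α ∧
    ((∀ a i j k, α a i j k = z a k * t i k * v j k / ntfModel z t v a i j) →
      ntfCost c μ p z t v b = ntfCostPlus c μ p z t v b α) := by

  have hm : ∀ a i j, 0 < ntfModel z t v a i j := by
    intro a i j
    have hK : 0 < K := by
      rcases Nat.eq_zero_or_pos K with h | h
      · subst h; have := hαsum a i j; simp at this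
      · exact h
    exact Finset.sum_pos (fun k _ => mul_pos (mul_pos (hz a k) (ht i k)) (hv j k))
      ⟨⟨0, hK⟩, Finset.mem_univ _⟩
  have key : ∀ a i j,
      klD (c a i j) (ntfModel z t v a i j) =
        c a i j * Real.log (c a i j) - c a i j
          - c a i j * Real.log (ntfModel z t v a i j) + ntfModel z t v a i j := by
    intro a i j
    rw [klD_eq' _ _ (hc a i j) (hm a i j)]
    ring
  have hjen : ∀ a i j,
      ∑ k, α a i j k * Real.log (z a k * t i k * v j k / α a i j k)
        ≤ Real.log (ntfModel z t v a i j) := by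
    intro a i j
    exact jensen_log (α a i j) (fun k => z a k * t i k * v j k) (hα a i j)
      (fun k => mul_pos (mul_pos (hz a k) (ht i k)) (hv j k)) (hαsum a i j)
  constructor
  · unfold ntfCost ntfCostPlus
    apply add_le_add_left
    apply Finset.sum_le_sum; intro a _
    apply Finset.sum_le_sum; intro i _
    apply Finset.sum_le_sum; intro j _
    rw [key a i j]
    have := mul_le_mul_of_nonneg_left (hjen a i j) (hc a i j)
    linarith
  · intro heq
    unfold ntfCost ntfCostPlus
    apply congrArg (· + _)
    apply Finset.sum_congr rfl; intro a _
    apply Finset.sum_congr rfl; intro i _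
    apply Finset.sum_congr rfl; intro j _
    rw [key a i j]
    have hT : ∑ k, α a i j k * Real.log (z a k * t i k * v j k / α a i j k)
        = Real.log (ntfModel z t v a i j) := by
      have : ∀ k : Fin K, α a i j k * Real.log (z a k * t i k * v j k / α a i j k)
          = α a i j k * Real.log (ntfModel z t v a i j) := by
        intro k
        have hx : z a k * t i k * v j k / (z a k * t i k * v j k / ntfModel z t v a i j)
            = ntfModel z t v a i j := by
          rw [div_div_eq_mul_div, mul_div_assoc, mul_comm,
            div_mul_cancel₀ _ (mul_pos (mul_pos (hz a k) (ht i k)) (hv j k)).ne']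
        rw [heq a i j k, hx]
      rw [Finset.sum_congr rfl (fun k _ => this k), ← Finset.sum_mul, hαsum a i j, one_mul]
    rw [hT]
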